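/- Let {φ_n} and {φ'_n} be two sequences of monic polynomials with deg φ_n = n, related by φ_n = Σ_{m=0}^n t(n,m) φ'_m. For a partition ν with at most N parts, define φ_{ν|N}(x_1,…,x_N) = det[φ_{ν_i+N-i}(x_j)]_{i,j=1}^N / V_N(x), where V_N is the Vandermonde determinant. Then φ_{ν|N} = Σ_{μ ⊆ ν} t(ν,μ) φ'_{μ|N}, where t(ν,μ) = det[t(ν_i+N-i, μ_j+N-j)]_{i,j=1}^N. -/

import Mathlib

open scoped Classical

/-- The Vandermonde product `V_N(x) = ∏_{i<j} (x_i - x_j)`. -/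
noncomputable def vandermondeProd {N : ℕ} (x : Fin N → ℝ) : ℝ :=
  ∏ i : Fin N, ∏ j ∈ Finset.univ.filter (fun j => i < j), (x i - x j)

/-- A strictly antitone `ℕ`-valued tuple drops at least `d` over a gap of size `d`. -/
lemma strictAnti_add_le {N : ℕ} {ρ : Fin N → ℕ} (h : StrictAnti ρ) :
    ∀ (d : ℕ) (i j : Fin N), (i : ℕ) + d = (j : ℕ) → ρ j + d ≤ ρ i := by
  intro d
  induction d with
  | zero =>
      intro i j hij
      have : i = j := Fin.ext (by omega)
      subst this; simp
  | succ d ih =>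
      intro i j hij
      have hk : (i : ℕ) + d < N := by have := j.isLt; omega
      have h1 : ρ ⟨(i : ℕ) + d, hk⟩ + d ≤ ρ i := ih i ⟨(i : ℕ) + d, hk⟩ rfl
      have h2 : ρ j < ρ ⟨(i : ℕ) + d, hk⟩ := h (by simp [Fin.lt_def]; omega)
      omega

/-- A strictly monotone permutation of `Fin N` is the identity. -/
lemma strictMono_perm_eq_refl {N : ℕ} (e : Equiv.Perm (Fin N)) (h : StrictMono (⇑e)) :
    e = Equiv.refl _ := by
  have inst : WellFoundedLT (Fin N) := inferInstance
  have hsymm : StrictMono (⇑e.symm) := by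
    intro a b hab
    rcases lt_trichotomy (e.symm a) (e.symm b) with hc | hc | hc
    · exact hc
    · exfalso; rw [← e.apply_symm_apply a, ← e.apply_symm_apply b, hc] at hab
      exact lt_irrefl _ hab
    · exfalso
      have := h hc
      rw [e.apply_symm_apply, e.apply_symm_apply] at this
      exact lt_asymm hab this
  ext i
  have h1 : i ≤ e i := @StrictMono.le_apply (Fin N) _ inst _ h i
  have h2 : e i ≤ e.symm (e i) := @StrictMono.le_apply (Fin N) _ inst _ hsymm (e i)
  rw [e.symm_apply_apply] at h2
  exact le_antisymm h2 h1

/-- Expansion of multivariate analogs: if `{φ_n}` and `{φ'_n}` are monic bases of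
polynomials with `φ_n = ∑_{m ≤ n} t(n,m) φ'_m`, then for a partition `ν` with at
most `N` parts, `φ_{ν|N} = ∑_{μ ⊆ ν} t(ν,μ) φ'_{μ|N}`, where
`φ_{ν|N}(x) = det[φ_{ν_i+N-i}(x_j)]/V_N(x)` and
`t(ν,μ) = det[t(ν_i+N-i, μ_j+N-j)]`. -/
theorem multivariate_expansion (N : ℕ) (t : ℕ → ℕ → ℝ) (φ φ' : ℕ → Polynomial ℝ)
    (hmonic : ∀ n, (φ n).Monic) (hdeg : ∀ n, (φ n).natDegree = n)
    (hmonic' : ∀ n, (φ' n).Monic) (hdeg' : ∀ n, (φ' n).natDegree = n)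
    (hrel : ∀ n, φ n = ∑ m ∈ Finset.range (n + 1), Polynomial.C (t n m) * φ' m)
    (ht : ∀ n m, n < m → t n m = 0)
    (ν : Fin N → ℕ) (hν : Antitone ν) (x : Fin N → ℝ) :
    Matrix.det (Matrix.of fun i j : Fin N =>
        (φ (ν i + (N - 1 - (i : ℕ)))).eval (x j)) / vandermondeProd x =
      ∑ g ∈ (Finset.univ : Finset (∀ i : Fin N, Fin (ν i + 1))).filter
          (fun g => Antitone fun i => (g i : ℕ)),
        Matrix.det (Matrix.of fun i j : Fin N =>
            t (ν i + (N - 1 - (i : ℕ))) ((g j : ℕ) + (N - 1 - (j : ℕ)))) *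
          (Matrix.det (Matrix.of fun i j : Fin N =>
              (φ' ((g i : ℕ) + (N - 1 - (i : ℕ)))).eval (x j)) / vandermondeProd x) := by
  -- Abbreviations
  set lam : Fin N → ℕ := fun i => ν i + (N - 1 - (i : ℕ)) with hlam_def
  have hlam_anti : Antitone lam := by
    intro i j hij
    have h1 : ν j ≤ ν i := hν hij
    have h2 : N - 1 - (j : ℕ) ≤ N - 1 - (i : ℕ) :=
      Nat.sub_le_sub_left (by exact_mod_cast hij) _
    simpa [hlam_def] using Nat.add_le_add h1 h2
  set L : ℕ := Finset.univ.sup ν + N with hL_def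
  have hlamL : ∀ i : Fin N, lam i < L := by
    intro i
    have h1 : ν i ≤ Finset.univ.sup ν := Finset.le_sup (Finset.mem_univ i)
    have h2 : (i : ℕ) < N := i.isLt
    simp only [hlam_def, hL_def]
    omega
  set mu : (∀ i : Fin N, Fin (ν i + 1)) → Fin N → ℕ :=
    fun g i => (g i : ℕ) + (N - 1 - (i : ℕ)) with hmu_def
  have hmu_strictAnti : ∀ g, (Antitone fun i => ((g i : ℕ))) → StrictAnti (mu g) := by
    intro g hg i j hij
    have h1 : (g j : ℕ) ≤ (g i : ℕ) := hg (le_of_lt hij)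
    have h2 : N - 1 - (j : ℕ) < N - 1 - (i : ℕ) := by
      have hj := j.isLt
      have : (i : ℕ) < (j : ℕ) := hij
      omega
    simp only [hmu_def]
    omega
  set F : (Fin N → ℕ) → ℝ := fun r =>
    (∏ i, t (lam i) (r i)) *
      Matrix.det (Matrix.of fun i j : Fin N => (φ' (r i)).eval (x j)) with hF_def
  -- Step 1: expand the determinant by multilinearity
  have step1 : Matrix.det (Matrix.of fun i j : Fin N => (φ (lam i)).eval (x j))
      = ∑ r ∈ Fintype.piFinset (fun _ : Fin N => Finset.range L), F r := by
    have hrow : (Matrix.of fun i j : Fin N => (φ (lam i)).eval (x j))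
        = fun i => ∑ m ∈ Finset.range L,
            (t (lam i) m) • (fun j : Fin N => (φ' m).eval (x j)) := by
      funext i j
      have hev : (φ (lam i)).eval (x j)
          = ∑ m ∈ Finset.range (lam i + 1), t (lam i) m * (φ' m).eval (x j) := by
        rw [hrel (lam i)]
        simp [Polynomial.eval_finset_sum]
      have hsub : Finset.range (lam i + 1) ⊆ Finset.range L := by
        intro m hm
        simp only [Finset.mem_range] at *
        have := hlamL i
        omega
      have hext : ∑ m ∈ Finset.range (lam i + 1), t (lam i) m * (φ' m).eval (x j)
          = ∑ m ∈ Finset.range L, t (lam i) m * (φ' m).eval (x j) := by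
        refine Finset.sum_subset hsub ?_
        intro m hm hnm
        simp only [Finset.mem_range] at hm hnm
        rw [ht (lam i) m (by omega)]
        ring
      rw [Matrix.of_apply, hev, hext]
      simp [Finset.sum_apply]
    have hms := (Matrix.detRowAlternating :
        (Fin N → ℝ) [⋀^Fin N]→ₗ[ℝ] ℝ).toMultilinearMap.map_sum_finset
      (fun i m => (t (lam i) m) • (fun j : Fin N => (φ' m).eval (x j)))
      (fun _ => Finset.range L)
    rw [show Matrix.det (Matrix.of fun i j : Fin N => (φ (lam i)).eval (x j))
        = (Matrix.detRowAlternating :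
            (Fin N → ℝ) [⋀^Fin N]→ₗ[ℝ] ℝ).toMultilinearMap
          (Matrix.of fun i j : Fin N => (φ (lam i)).eval (x j)) from rfl, hrow]
    refine hms.trans ?_
    refine Finset.sum_congr rfl ?_
    intro r _
    have hfn : (fun i => t (lam i) (r i) • fun j : Fin N => (φ' (r i)).eval (x j))
        = Matrix.of fun i j : Fin N => t (lam i) (r i) * (φ' (r i)).eval (x j) := by
      funext i
      funext j
      simp [smul_eq_mul]
    rw [hfn]
    rw [show ((Matrix.detRowAlternating :
          (Fin N → ℝ) [⋀^Fin N]→ₗ[ℝ] ℝ).toMultilinearMap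
          (Matrix.of fun i j : Fin N => t (lam i) (r i) * (φ' (r i)).eval (x j)))
        = Matrix.det (Matrix.of fun i j : Fin N =>
            t (lam i) (r i) * (φ' (r i)).eval (x j)) from rfl]
    rw [show Matrix.det (Matrix.of fun i j : Fin N => t (lam i) (r i) * (φ' (r i)).eval (x j))
      = (∏ i, t (lam i) (r i)) * Matrix.det (Matrix.of fun i j : Fin N => (φ' (r i)).eval (x j))
      from Matrix.det_mul_column (fun i => t (lam i) (r i))
        (Matrix.of fun i j : Fin N => (φ' (r i)).eval (x j))]
  -- the index set of (choice, permutation) pairs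
  set G : Finset ((∀ i : Fin N, Fin (ν i + 1)) × Equiv.Perm (Fin N)) :=
    ((Finset.univ : Finset (∀ i : Fin N, Fin (ν i + 1))).filter
      (fun g => Antitone fun i => (g i : ℕ))) ×ˢ Finset.univ with hG_def
  set mfun : ((∀ i : Fin N, Fin (ν i + 1)) × Equiv.Perm (Fin N)) → (Fin N → ℕ) :=
    fun p i => mu p.1 (p.2 i) with hmfun_def
  -- Step 2: terms outside the image vanish
  have himage : ∀ r ∈ Fintype.piFinset (fun _ : Fin N => Finset.range L),
      r ∉ Finset.image mfun G → F r = 0 := by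
    intro r hr hnot
    by_contra hF0
    apply hnot
    have hprod : (∏ i, t (lam i) (r i)) ≠ 0 := fun h => hF0 (by rw [hF_def]; simp [h])
    have hdetP : Matrix.det (Matrix.of fun i j : Fin N => (φ' (r i)).eval (x j)) ≠ 0 :=
      fun h => hF0 (by rw [hF_def]; simp [h])
    have hinj : Function.Injective r := by
      intro i j hij
      by_contra hne
      exact hdetP (Matrix.det_zero_of_row_eq hne (by
        funext k; simp [hij]))
    have hle : ∀ i, r i ≤ lam i := by
      intro i
      by_contra hgt
      exact hprod (Finset.prod_eq_zero (Finset.mem_univ i) (ht _ _ (by omega)))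
    set τ : Equiv.Perm (Fin N) := Tuple.sort r with hτ_def
    have hmono : Monotone (r ∘ τ) := Tuple.monotone_sort r
    have hsm : StrictMono (r ∘ τ) :=
      hmono.strictMono_of_injective (hinj.comp τ.injective)
    set ρ : Fin N → ℕ := fun k => r (τ (Fin.rev k)) with hρ_def
    have hρ_anti : StrictAnti ρ := by
      intro k l hkl
      exact hsm (Fin.rev_lt_rev.mpr hkl)
    have hρ_ge : ∀ i : Fin N, N - 1 - (i : ℕ) ≤ ρ i := by
      intro i
      have hN : 0 < N := i.pos
      have hval : (((⟨N - 1, by omega⟩ : Fin N)) : ℕ) = N - 1 := rfl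
      have hd : (i : ℕ) + (N - 1 - (i : ℕ)) = (((⟨N - 1, by omega⟩ : Fin N)) : ℕ) := by
        rw [hval]; have := i.isLt; omega
      have := strictAnti_add_le hρ_anti (N - 1 - (i : ℕ)) i ⟨N - 1, by omega⟩ hd
      omega
    have hρ_le : ∀ i : Fin N, ρ i ≤ lam i := by
      intro i
      have hex : ∃ k ∈ Finset.Iic i, i ≤ τ (Fin.rev k) := by
        by_contra hc
        push_neg at hc
        have hsubset : (Finset.Iic i).image (fun k => τ (Fin.rev k)) ⊆ Finset.Iio i := by
          intro a ha
          rcases Finset.mem_image.mp ha with ⟨k, hk, rfl⟩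
          exact Finset.mem_Iio.mpr (hc k hk)
        have hinj2 : Function.Injective (fun k : Fin N => τ (Fin.rev k)) :=
          fun a b hab => Fin.rev_injective (τ.injective hab)
        have hcard : ((Finset.Iic i).image (fun k => τ (Fin.rev k))).card
            = (i : ℕ) + 1 := by
          rw [Finset.card_image_of_injective _ hinj2, Fin.card_Iic]
        have := Finset.card_le_card hsubset
        rw [hcard, Fin.card_Iio] at this
        omega
      rcases hex with ⟨k, hk, hik⟩
      calc ρ i ≤ ρ k := hρ_anti.antitone (Finset.mem_Iic.mp hk)
        _ = r (τ (Fin.rev k)) := rfl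
        _ ≤ lam (τ (Fin.rev k)) := hle _
        _ ≤ lam i := hlam_anti hik
    have hgval : ∀ i : Fin N, ρ i - (N - 1 - (i : ℕ)) < ν i + 1 := by
      intro i
      have h1 := hρ_le i
      have h2 := hρ_ge i
      simp only [hlam_def] at h1
      omega
    set g : ∀ i : Fin N, Fin (ν i + 1) := fun i => ⟨ρ i - (N - 1 - (i : ℕ)), hgval i⟩
      with hg_def
    have hg_anti : Antitone fun i => ((g i : ℕ)) := by
      intro i j hij
      have h1 : ρ j + ((j : ℕ) - (i : ℕ)) ≤ ρ i :=
        strictAnti_add_le hρ_anti ((j : ℕ) - (i : ℕ)) i j (by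
          have : (i : ℕ) ≤ (j : ℕ) := hij
          omega)
      have h2 := hρ_ge j
      have h3 : (i : ℕ) ≤ (j : ℕ) := hij
      have h4 := j.isLt
      simp only [hg_def]
      omega
    have hmug : ∀ i, mu g i = ρ i := by
      intro i
      simp only [hmu_def, hg_def]
      have := hρ_ge i
      omega
    set σ : Equiv.Perm (Fin N) := τ.symm.trans Fin.revPerm with hσ_def
    refine Finset.mem_image.mpr ⟨(g, σ), ?_, ?_⟩
    · simp only [hG_def, Finset.mem_product, Finset.mem_filter, Finset.mem_univ,
        true_and, and_true]
      exact hg_anti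
    · funext i
      simp only [hmfun_def]
      rw [hmug]
      simp only [hρ_def, hσ_def]
      simp [Fin.rev_rev]
  -- Step 3: mfun is injective on G
  have hminj : ∀ p ∈ G, ∀ q ∈ G, mfun p = mfun q → p = q := by
    intro p hp q hq hpq
    simp only [hG_def, Finset.mem_product, Finset.mem_filter, Finset.mem_univ,
      true_and, and_true] at hp hq
    have hpA := hmu_strictAnti p.1 hp
    have hqA := hmu_strictAnti q.1 hq
    set e : Equiv.Perm (Fin N) := p.2.symm.trans q.2 with he_def
    have hkey : ∀ k, mu p.1 k = mu q.1 (e k) := by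
      intro k
      have := congrFun hpq (p.2.symm k)
      simpa [hmfun_def, he_def] using this
    have hesm : StrictMono (⇑e) := by
      intro a b hab
      have h1 : mu p.1 b < mu p.1 a := hpA hab
      rw [hkey a, hkey b] at h1
      exact StrictAnti.lt_iff_gt hqA |>.mp h1
    have heid : e = Equiv.refl _ := strictMono_perm_eq_refl e hesm
    have hperm : p.2 = q.2 := by
      apply Equiv.ext
      intro j
      have h5 : e (p.2 j) = p.2 j := by rw [heid]; rfl
      simp only [he_def, Equiv.trans_apply, Equiv.symm_apply_apply] at h5
      exact h5.symm
    have hgeq : p.1 = q.1 := by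
      funext i
      have h1 := hkey i
      rw [heid] at h1
      simp only [Equiv.refl_apply, hmu_def] at h1
      exact Fin.ext (by omega)
    exact Prod.ext hgeq hperm
  -- Step 4: image of G is inside the pi finset
  have hsub : Finset.image mfun G ⊆ Fintype.piFinset (fun _ : Fin N => Finset.range L) := by
    intro r hr
    rcases Finset.mem_image.mp hr with ⟨p, hp, rfl⟩
    refine Fintype.mem_piFinset.mpr ?_
    intro i
    simp only [Finset.mem_range, hmfun_def, hmu_def]
    have h1 : (p.1 (p.2 i) : ℕ) ≤ ν (p.2 i) := Nat.lt_succ_iff.mp (p.1 (p.2 i)).isLt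
    have h2 := hlamL (p.2 i)
    simp only [hlam_def] at h2
    omega
  -- Step 5: key determinant identity
  have key : Matrix.det (Matrix.of fun i j : Fin N => (φ (lam i)).eval (x j))
      = ∑ g ∈ (Finset.univ : Finset (∀ i : Fin N, Fin (ν i + 1))).filter
          (fun g => Antitone fun i => (g i : ℕ)),
        Matrix.det (Matrix.of fun i j : Fin N => t (lam i) (mu g j)) *
          Matrix.det (Matrix.of fun i j : Fin N => (φ' (mu g i)).eval (x j)) := by
    rw [step1]
    rw [← Finset.sum_subset hsub himage]
    rw [Finset.sum_image hminj]
    rw [hG_def, Finset.sum_product]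
    refine Finset.sum_congr rfl ?_
    intro g hg
    simp only [Finset.mem_filter, Finset.mem_univ, true_and] at hg
    have hterm : ∀ σ : Equiv.Perm (Fin N), F (mfun (g, σ))
        = (((Equiv.Perm.sign σ : ℤ) : ℝ) * ∏ i, t (lam i) (mu g (σ i))) *
            Matrix.det (Matrix.of fun i j : Fin N => (φ' (mu g i)).eval (x j)) := by
      intro σ
      have hperm : Matrix.det (Matrix.of fun i j : Fin N => (φ' (mu g (σ i))).eval (x j))
          = ((Equiv.Perm.sign σ : ℤ) : ℝ) *
              Matrix.det (Matrix.of fun i j : Fin N => (φ' (mu g i)).eval (x j)) := by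
        have h := Matrix.det_permute σ
          (Matrix.of fun i j : Fin N => (φ' (mu g i)).eval (x j))
        simpa [Matrix.submatrix] using h
      simp only [hF_def, hmfun_def]
      rw [hperm]
      ring
    calc (∑ σ : Equiv.Perm (Fin N), F (mfun (g, σ)))
        = ∑ σ : Equiv.Perm (Fin N),
            (((Equiv.Perm.sign σ : ℤ) : ℝ) * ∏ i, t (lam i) (mu g (σ i))) *
              Matrix.det (Matrix.of fun i j : Fin N => (φ' (mu g i)).eval (x j)) :=
          Finset.sum_congr rfl (fun σ _ => hterm σ)
      _ = (∑ σ : Equiv.Perm (Fin N),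
            ((Equiv.Perm.sign σ : ℤ) : ℝ) * ∏ i, t (lam i) (mu g (σ i))) *
              Matrix.det (Matrix.of fun i j : Fin N => (φ' (mu g i)).eval (x j)) := by
          rw [Finset.sum_mul]
      _ = Matrix.det (Matrix.of fun i j : Fin N => t (lam i) (mu g j)) *
              Matrix.det (Matrix.of fun i j : Fin N => (φ' (mu g i)).eval (x j)) := by
          congr 1
          rw [← Matrix.det_transpose (Matrix.of fun i j : Fin N => t (lam i) (mu g j)),
            Matrix.det_apply']
          refine Finset.sum_congr rfl ?_
          intro σ _
          simp [Matrix.transpose_apply]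
  -- Conclusion
  have key' : Matrix.det (Matrix.of fun i j : Fin N =>
        (φ (ν i + (N - 1 - (i : ℕ)))).eval (x j))
      = ∑ g ∈ (Finset.univ : Finset (∀ i : Fin N, Fin (ν i + 1))).filter
          (fun g => Antitone fun i => (g i : ℕ)),
        Matrix.det (Matrix.of fun i j : Fin N =>
            t (ν i + (N - 1 - (i : ℕ))) ((g j : ℕ) + (N - 1 - (j : ℕ)))) *
          Matrix.det (Matrix.of fun i j : Fin N =>
              (φ' ((g i : ℕ) + (N - 1 - (i : ℕ)))).eval (x j)) := key
  rw [key', Finset.sum_div]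
  exact Finset.sum_congr rfl (fun g _ => mul_div_assoc _ _ _)
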